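/- arXiv:math/0208084 — 4 statements merged into one kernel-verified Lean document; each statement's English description precedes it below -/
import Mathlib

section
/- Let N be a unital C*-algebra and let A be a separable C*-subalgebra of N. Then there exists a separable C*-subalgebra B of N with A ⊆ B ⊆ N and 1 ∈ B such that every tracial state on B is the restriction to B of a tracial state on N. -/
open Metric Complex TopologicalSpace ComplexConjugate

/-- A *tracial state* on a unital C*-algebra `D` is a continuous linear functional
`τ : D → ℂ` with `τ 1 = 1`, taking nonnegative real values on elements of the form
`x* x`, and satisfying the trace identity `τ (a b) = τ (b a)`. -/
def IsTracialState {D : Type*} [NormedRing D] [StarRing D] [NormedAlgebra ℂ D]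
    (τ : D →L[ℂ] ℂ) : Prop :=
  τ 1 = 1 ∧ (∀ x : D, ∃ r : ℝ, 0 ≤ r ∧ τ (star x * x) = r) ∧
    ∀ a b : D, τ (a * b) = τ (b * a)

namespace TraceExt

section TauLemmas
variable {D : Type*} [NormedRing D] [StarRing D] [NormedAlgebra ℂ D] [StarModule ℂ D]
variable (τ : D →L[ℂ] ℂ)

lemma real_pos (hτ : IsTracialState τ) (x : D) :
    0 ≤ (τ (star x * x)).re ∧ (τ (star x * x)).im = 0 := by
  obtain ⟨r, hr, hx⟩ := hτ.2.1 x
  rw [hx]; exact ⟨by simpa using hr, by simp⟩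

lemma expand_quad (t : ℂ) (y : D) :
    τ (star (1 + t • y) * (1 + t • y)) =
      τ 1 + t * τ y + conj t * τ (star y) + (conj t * t) * τ (star y * y) := by
  have h1 : star (1 + t • y) * (1 + t • y)
      = 1 + t • y + conj t • star y + (conj t * t) • (star y * y) := by
    simp only [star_add, star_one, star_smul, add_mul, mul_add, one_mul, mul_one,
      smul_mul_assoc, mul_smul_comm, smul_smul, smul_add, starRingEnd_apply]
    module
  rw [h1]
  simp only [map_add, map_smul, smul_eq_mul]

lemma star_apply (hτ : IsTracialState τ) (y : D) : τ (star y) = conj (τ y) := by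
  have him : ∀ t : ℂ, (t * τ y + conj t * τ (star y)).im = 0 := by
    intro t
    have h := (real_pos τ hτ (1 + t • y)).2
    rw [expand_quad] at h
    have h2 : (conj t * t * τ (star y * y)).im = 0 := by
      have hc : conj t * t = ((normSq t : ℝ) : ℂ) := by rw [mul_comm, Complex.mul_conj]
      rw [hc]
      simp [(real_pos τ hτ y).2]
    have h1 : (τ 1).im = 0 := by rw [hτ.1]; simp
    simp only [Complex.add_im] at h ⊢
    linarith
  have e1 := him 1
  have e2 := him I
  simp only [one_mul, map_one, Complex.add_im, Complex.mul_im, Complex.conj_I,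
    Complex.I_re, Complex.I_im, Complex.neg_re, Complex.neg_im, map_one] at e1 e2
  apply Complex.ext
  · simp only [Complex.conj_re]; nlinarith [e2]
  · simp only [Complex.conj_im]; linarith [e1]

lemma norm_sq_le (hτ : IsTracialState τ) (y : D) :
    ‖τ y‖ ^ 2 ≤ (τ (star y * y)).re := by
  set t := τ y with ht
  have key : τ (star (y - t • 1) * (y - t • 1)) = τ (star y * y) - conj t * t := by
    have h1 : star (y - t • 1) * (y - t • 1)
        = star y * y - t • star y - conj t • y + (conj t * t) • 1 := by
      simp only [star_sub, star_smul, star_one, sub_mul, mul_sub, mul_one, one_mul,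
        smul_mul_assoc, mul_smul_comm, smul_smul, smul_sub, starRingEnd_apply]
      module
    rw [h1]
    simp only [map_add, map_sub, map_smul, smul_eq_mul, hτ.1, mul_one,
      star_apply τ hτ y, ← ht]
    ring
  have pos := (real_pos τ hτ (y - t • 1)).1
  rw [key] at pos
  simp only [Complex.sub_re] at pos
  have hre : (conj t * t).re = ‖t‖ ^ 2 := by
    rw [mul_comm, Complex.mul_conj, Complex.ofReal_re, Complex.normSq_eq_norm_sq]
  linarith

lemma norm_apply_le [CStarRing D] (hτ : IsTracialState τ) (y : D) : ‖τ y‖ ≤ ‖y‖ := by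
  set C := max ‖τ‖ 1 with hC
  have hC1 : (1 : ℝ) ≤ C := le_max_right _ _
  have hCτ : ‖τ‖ ≤ C := le_max_left _ _
  have hC0 : (0:ℝ) < C := lt_of_lt_of_le one_pos hC1
  have main : ∀ n : ℕ, ∀ z : D, ‖τ z‖ ^ (2 ^ (n+1)) ≤ C * ‖z‖ ^ (2 ^ (n+1)) := by
    intro n
    induction n with
    | zero =>
      intro z
      have h1 : ‖τ z‖ ^ 2 ≤ (τ (star z * z)).re := norm_sq_le τ hτ z
      have h2 : (τ (star z * z)).re ≤ ‖τ (star z * z)‖ := Complex.re_le_norm _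
      have h3 : ‖τ (star z * z)‖ ≤ ‖τ‖ * ‖star z * z‖ := τ.le_opNorm _
      have h4 : ‖star z * z‖ = ‖z‖ * ‖z‖ := CStarRing.norm_star_mul_self
      calc ‖τ z‖ ^ (2^1) ≤ ‖τ (star z * z)‖ := by rw [pow_one] at *; linarith
        _ ≤ C * ‖z‖ ^ (2^1) := by
            rw [pow_one]
            calc ‖τ (star z * z)‖ ≤ ‖τ‖ * ‖star z * z‖ := h3
              _ ≤ C * ‖z‖ ^ 2 := by
                  rw [h4, sq]
                  exact mul_le_mul_of_nonneg_right hCτ (mul_nonneg (norm_nonneg _) (norm_nonneg _))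
    | succ n ih =>
      intro z
      have e1 : ‖τ z‖ ^ (2 ^ (n+2)) = (‖τ z‖ ^ 2) ^ (2 ^ (n+1)) := by
        rw [← pow_mul, pow_succ 2 (n+1), mul_comm (2^(n+1)) 2]
      have hre : 0 ≤ (τ (star z * z)).re := (real_pos τ hτ (z)).1
      have h1 : (‖τ z‖ ^ 2) ^ (2 ^ (n+1)) ≤ ((τ (star z * z)).re) ^ (2 ^ (n+1)) :=
        pow_le_pow_left₀ (sq_nonneg _) (norm_sq_le τ hτ z) _
      have h2 : ((τ (star z * z)).re) ^ (2 ^ (n+1)) ≤ ‖τ (star z * z)‖ ^ (2 ^ (n+1)) :=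
        pow_le_pow_left₀ hre (Complex.re_le_norm _) _
      have h3 := ih (star z * z)
      have h4 : ‖star z * z‖ ^ (2 ^ (n+1)) = ‖z‖ ^ (2 ^ (n+2)) := by
        rw [CStarRing.norm_star_mul_self, ← sq, ← pow_mul, pow_succ 2 (n+1), mul_comm (2^(n+1)) 2,
          mul_comm 2 (2^(n+1))]
      rw [e1]
      calc (‖τ z‖ ^ 2) ^ (2 ^ (n+1)) ≤ ‖τ (star z * z)‖ ^ (2 ^ (n+1)) := le_trans h1 h2
        _ ≤ C * ‖star z * z‖ ^ (2 ^ (n+1)) := h3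
        _ = C * ‖z‖ ^ (2 ^ (n+2)) := by rw [h4]
  by_contra hcon
  push_neg at hcon
  rcases eq_or_lt_of_le (norm_nonneg y) with h0 | h0
  · have h := main 0 y
    rw [← h0] at h
    norm_num at h
    have h5 : ‖τ y‖ = 0 := by rw [h, norm_zero]
    rw [h5, ← h0] at hcon; exact lt_irrefl _ hcon
  · set r := ‖τ y‖ / ‖y‖ with hr
    have hr1 : 1 < r := (one_lt_div h0).2 hcon
    have hbound : ∀ n : ℕ, r ^ (2 ^ (n+1)) ≤ C := by
      intro n
      have := main n y
      rw [hr, div_pow, div_le_iff₀ (by positivity)]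
      calc ‖τ y‖ ^ 2 ^ (n+1) ≤ C * ‖y‖ ^ 2 ^ (n+1) := this
        _ = C * ‖y‖ ^ 2 ^ (n+1) := rfl
    obtain ⟨k, hk⟩ := pow_unbounded_of_one_lt C hr1
    have hkk : k ≤ 2 ^ (k+1) := by
      have h5 : k < 2 ^ k := Nat.lt_two_pow_self
      have h6 : (2:ℕ) ^ k ≤ 2 ^ (k+1) := Nat.pow_le_pow_right (by norm_num) (Nat.le_succ k)
      omega
    have hk2 : r ^ k ≤ r ^ (2 ^ (k+1)) := pow_le_pow_right₀ (le_of_lt hr1) hkk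
    have : C < C := lt_of_lt_of_le (lt_of_lt_of_le hk hk2) (hbound k)
    exact lt_irrefl _ this

end TauLemmas



section DistLemmas
variable {E : Type*} [NormedAddCommGroup E] [NormedSpace ℝ E]

lemma infDist_smul_le (S : Submodule ℝ E) (c : ℝ) (hc : 0 < c) (x : E) :
    infDist (c • x) (S : Set E) ≤ c * infDist x (S : Set E) := by
  have hne : (S : Set E).Nonempty := ⟨0, S.zero_mem⟩
  refine le_of_forall_pos_le_add fun ε hε => ?_
  obtain ⟨y, hyS, hy⟩ := (infDist_lt_iff hne).1
    (lt_add_of_pos_right (infDist x (S : Set E)) (show (0:ℝ) < ε / c by positivity))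
  have h1 : infDist (c • x) (S : Set E) ≤ dist (c • x) (c • y) :=
    infDist_le_dist_of_mem (S.smul_mem c hyS)
  have h2 : dist (c • x) (c • y) = c * dist x y := by
    rw [dist_smul₀, Real.norm_eq_abs, abs_of_pos hc]
  calc infDist (c • x) (S : Set E) ≤ c * dist x y := by rw [← h2]; exact h1
    _ ≤ c * (infDist x (S : Set E) + ε / c) := by
        exact mul_le_mul_of_nonneg_left (le_of_lt hy) (le_of_lt hc)
    _ = c * infDist x (S : Set E) + ε := by field_simp

lemma infDist_smul (S : Submodule ℝ E) (c : ℝ) (hc : 0 < c) (x : E) :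
    infDist (c • x) (S : Set E) = c * infDist x (S : Set E) := by
  refine le_antisymm (infDist_smul_le S c hc x) ?_
  have h := infDist_smul_le S c⁻¹ (by positivity) (c • x)
  rw [inv_smul_smul₀ (ne_of_gt hc)] at h
  calc c * infDist x (S : Set E) ≤ c * (c⁻¹ * infDist (c • x) (S : Set E)) :=
        mul_le_mul_of_nonneg_left h (le_of_lt hc)
    _ = infDist (c • x) (S : Set E) := by field_simp

lemma infDist_add_le (S : Submodule ℝ E) (x y : E) :
    infDist (x + y) (S : Set E) ≤ infDist x (S : Set E) + infDist y (S : Set E) := by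
  have hne : (S : Set E).Nonempty := ⟨0, S.zero_mem⟩
  refine le_of_forall_pos_le_add fun ε hε => ?_
  obtain ⟨a, haS, ha⟩ := (infDist_lt_iff hne).1
    (lt_add_of_pos_right (infDist x (S : Set E)) (show (0:ℝ) < ε / 2 by positivity))
  obtain ⟨b, hbS, hb⟩ := (infDist_lt_iff hne).1
    (lt_add_of_pos_right (infDist y (S : Set E)) (show (0:ℝ) < ε / 2 by positivity))
  have h1 : infDist (x + y) (S : Set E) ≤ dist (x + y) (a + b) :=
    infDist_le_dist_of_mem (S.add_mem haS hbS)
  have h2 : dist (x + y) (a + b) ≤ dist x a + dist y b := dist_add_add_le x y a b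
  linarith

end DistLemmas

section NLemmas
variable {N : Type*} [CStarAlgebra N]

/-- commutator witness -/
noncomputable def cw (z : N) : N := z * star z - star z * z

lemma cw_star (z : N) : star (cw z) = cw z := by
  simp only [cw, star_sub, star_mul, star_star]

lemma span_star_eq {c : N} (hc : c ∈ Submodule.span ℝ (Set.range (cw : N → N))) :
    star c = c := by
  induction hc using Submodule.span_induction with
  | mem w hw => obtain ⟨z, rfl⟩ := hw; exact cw_star z
  | zero => simp
  | add a b _ _ ha hb => rw [star_add, ha, hb]
  | smul r a _ ha => rw [star_smul, star_trivial, ha]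

lemma norm_sub_smul_one_le [Nontrivial N] (x : N) :
    ‖‖star x * x‖ • (1 : N) - star x * x‖ ≤ ‖star x * x‖ := by
  letI := CStarAlgebra.spectralOrder N
  haveI := CStarAlgebra.spectralOrderedRing N
  set a := star x * x with ha
  have h0 : (0 : N) ≤ a := star_mul_self_nonneg x
  have hsa : IsSelfAdjoint a := by
    rw [ha]; exact IsSelfAdjoint.star_mul_self x
  have h1 : a ≤ algebraMap ℝ N ‖a‖ := IsSelfAdjoint.le_algebraMap_norm_self hsa
  have h2 : (0 : N) ≤ algebraMap ℝ N ‖a‖ - a := sub_nonneg.2 h1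
  have h3 : algebraMap ℝ N ‖a‖ - a ≤ algebraMap ℝ N ‖a‖ := by
    simpa using sub_le_self (algebraMap ℝ N ‖a‖) h0
  have h4 : ‖algebraMap ℝ N ‖a‖ - a‖ ≤ ‖algebraMap ℝ N ‖a‖‖ :=
    CStarAlgebra.norm_le_norm_of_nonneg_of_le h2 h3
  have h5 : ‖algebraMap ℝ N ‖a‖‖ = ‖a‖ := by
    rw [norm_algebraMap', Real.norm_eq_abs, _root_.abs_of_nonneg (norm_nonneg a)]
  rw [Algebra.algebraMap_eq_smul_one] at h4 h5
  calc ‖‖a‖ • (1:N) - a‖ ≤ ‖‖a‖ • (1:N)‖ := h4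
    _ = ‖a‖ := h5

lemma countable_adjoin_isSeparable {S : Set N} (hS : S.Countable) :
    IsSeparable ((StarAlgebra.adjoin ℂ S : StarSubalgebra ℂ N) : Set N) := by
  have hcc : (S ∪ star S).Countable := by
    refine hS.union ?_
    have : (star S : Set N) = star '' S := by
      ext w
      simp only [Set.mem_star, Set.mem_image]
      constructor
      · intro h; exact ⟨star w, h, by simp⟩
      · rintro ⟨v, hv, rfl⟩; simpa using hv
    rw [this]; exact hS.image _
  have hmc : ((Submonoid.closure (S ∪ star S) : Submonoid N) : Set N).Countable := by
    rw [Submonoid.closure_eq_mrange]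
    haveI := hcc.to_subtype
    haveI : Countable (FreeMonoid ↥(S ∪ star S)) :=
      inferInstanceAs (Countable (List ↥(S ∪ star S)))
    exact (Set.countable_range _).mono (by rw [MonoidHom.coe_mrange])
  have hsep : IsSeparable ((Submodule.span ℂ
      ((Submonoid.closure (S ∪ star S) : Submonoid N) : Set N) : Submodule ℂ N) : Set N) :=
    hmc.isSeparable.span
  have hset : ((StarAlgebra.adjoin ℂ S : StarSubalgebra ℂ N) : Set N) =
      ((Submodule.span ℂ ((Submonoid.closure (S ∪ star S) : Submonoid N) : Set N) :
        Submodule ℂ N) : Set N) := by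
    have := StarAlgebra.adjoin_eq_span (R := ℂ) (A := N) S
    exact congrArg (fun (M : Submodule ℂ N) => (M : Set N)) this
  rw [hset]
  exact hsep

end NLemmas



section NLemmas2
variable {N : Type*} [CStarAlgebra N]

lemma exV (b : N) (ε : ℝ) (hε : 0 < ε) :
    ∃ V : Set N, V.Countable ∧ ∃ c ∈ (Submodule.span ℝ (cw '' V) : Submodule ℝ N),
      ‖b - c‖ ≤ infDist b ((Submodule.span ℝ (Set.range (cw : N → N)) : Submodule ℝ N) : Set N)
        + ε := by
  classical
  set T := ((Submodule.span ℝ (Set.range (cw : N → N)) : Submodule ℝ N) : Set N) with hT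
  have hne : T.Nonempty := ⟨0, Submodule.zero_mem _⟩
  obtain ⟨c, hcT, hdist⟩ := (infDist_lt_iff hne).1
    (lt_add_of_pos_right (infDist b T) hε)
  obtain ⟨t, hts, hct⟩ := Submodule.mem_span_finite_of_mem_span hcT
  let g : N → N := fun w => if h : w ∈ Set.range (cw : N → N) then h.choose else 0
  have hg : ∀ w ∈ (t : Set N), cw (g w) = w := by
    intro w hw
    have h : w ∈ Set.range (cw : N → N) := hts hw
    simp only [g, dif_pos h]
    exact h.choose_spec
  refine ⟨g '' (t : Set N), (t.countable_toSet).image _, c, ?_, ?_⟩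
  · refine Submodule.span_mono ?_ hct
    intro w hw
    exact ⟨g w, Set.mem_image_of_mem g hw, hg w hw⟩
  · rw [← dist_eq_norm]
    exact le_of_lt hdist

end NLemmas2


end TraceExt
set_option maxHeartbeats 2000000 in
/-- Given a unital C*-algebra `N` and a separable C*-subalgebra `A ⊆ N`, there exists a
separable C*-subalgebra `B` with `A ⊆ B ⊆ N` and `1 ∈ B` such that every tracial state
on `B` is the restriction to `B` of a tracial state on `N`. -/
theorem exists_separable_intermediate_subalgebra_traces_extend
    (N : Type*) [CStarAlgebra N]
    (A : NonUnitalStarSubalgebra ℂ N) (hA_closed : IsClosed (A : Set N))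
    (hA_sep : TopologicalSpace.SeparableSpace A) :
    ∃ B : StarSubalgebra ℂ N, IsClosed (B : Set N) ∧
      TopologicalSpace.SeparableSpace B ∧ (A : Set N) ⊆ (B : Set N) ∧ (1 : N) ∈ B ∧
      ∀ τ : B →L[ℂ] ℂ, IsTracialState τ →
        ∃ σ : N →L[ℂ] ℂ, IsTracialState σ ∧ ∀ b : B, τ b = σ (b : N) := by
  classical
  open TraceExt in
  rcases subsingleton_or_nontrivial N with hN | hN
  · refine ⟨⊤, by simp, ?_, by simp, trivial, ?_⟩
    · haveI : Countable N := Subsingleton.to_countable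
      haveI : Countable (⊤ : StarSubalgebra ℂ N) := Subtype.countable
      exact ⟨⟨Set.univ, Set.countable_univ, dense_univ⟩⟩
    · intro τ hτ
      exfalso
      have h10 : (1 : (⊤ : StarSubalgebra ℂ N)) = 0 := Subsingleton.elim _ _
      have : (1 : ℂ) = 0 := by rw [← hτ.1, h10, map_zero]
      exact one_ne_zero this
  · -- main case
    set K : Submodule ℝ N := Submodule.span ℝ (Set.range (TraceExt.cw : N → N)) with hK
    set T : Set N := (K : Set N) with hTdef
    have exD : ∀ S : Set N, S.Countable → ∃ D : Set N, D.Countable ∧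
        ((StarAlgebra.adjoin ℂ S : StarSubalgebra ℂ N) : Set N) ⊆ closure D :=
      fun S hS => TraceExt.countable_adjoin_isSeparable hS
    set Dfun : Set N → Set N :=
      fun S => if h : S.Countable then (exD S h).choose else ∅ with hDfundef
    have hDfun : ∀ S : Set N, S.Countable → (Dfun S).Countable ∧
        ((StarAlgebra.adjoin ℂ S : StarSubalgebra ℂ N) : Set N) ⊆ closure (Dfun S) := by
      intro S h
      simp only [hDfundef, dif_pos h]
      exact (exD S h).choose_spec
    have vex : ∀ (b : N) (m : ℕ), ∃ V : Set N, V.Countable ∧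
        ∃ c ∈ (Submodule.span ℝ (TraceExt.cw '' V) : Submodule ℝ N),
          ‖b - c‖ ≤ infDist b T + 1/(m+1) :=
      fun b m => TraceExt.exV b (1/(m+1)) (by positivity)
    set Vfun : N → ℕ → Set N := fun b m => (vex b m).choose with hVfundef
    have hVfun : ∀ b m, (Vfun b m).Countable ∧
        ∃ c ∈ (Submodule.span ℝ (TraceExt.cw '' (Vfun b m)) : Submodule ℝ N),
          ‖b - c‖ ≤ infDist b T + 1/(m+1) := fun b m => (vex b m).choose_spec
    haveI : TopologicalSpace.SeparableSpace ((A : Set N) : Type _) := hA_sep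
    have hAsep' : TopologicalSpace.IsSeparable (A : Set N) :=
      TopologicalSpace.IsSeparable.of_subtype _
    obtain ⟨D0, hD0c, hD0⟩ := hAsep'
    set Sfun : ℕ → Set N := fun n =>
      Nat.rec D0 (fun _ Sn => Sn ∪ ⋃ b ∈ Dfun Sn, ⋃ m : ℕ, Vfun b m) n with hSfundef
    have hSsucc : ∀ n, Sfun (n+1) = Sfun n ∪ ⋃ b ∈ Dfun (Sfun n), ⋃ m : ℕ, Vfun b m :=
      fun n => rfl
    have hScount : ∀ n, (Sfun n).Countable := by
      intro n
      induction n with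
      | zero => exact hD0c
      | succ n ih =>
        rw [hSsucc]
        exact ih.union (((hDfun _ ih).1).biUnion
          fun b _ => Set.countable_iUnion fun m => (hVfun b m).1)
    have hSmono : Monotone Sfun := monotone_nat_of_le_succ fun n => by
      rw [hSsucc]; exact Set.subset_union_left
    set U : Set N := ⋃ n, Sfun n with hUdef
    have hUc : U.Countable := Set.countable_iUnion hScount
    set B : StarSubalgebra ℂ N := (StarAlgebra.adjoin ℂ U).topologicalClosure with hBdef
    have hBcoe : (B : Set N) = closure ((StarAlgebra.adjoin ℂ U : StarSubalgebra ℂ N) : Set N) :=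
      StarSubalgebra.topologicalClosure_coe _
    have hUB : U ⊆ (B : Set N) := by
      intro x hx
      rw [hBcoe]
      exact subset_closure (StarAlgebra.subset_adjoin ℂ U hx)
    have hBclosed : IsClosed (B : Set N) :=
      StarSubalgebra.isClosed_topologicalClosure _
    have hBsep : TopologicalSpace.SeparableSpace B := by
      have h1 : TopologicalSpace.IsSeparable (B : Set N) := by
        rw [hBcoe]
        exact (TraceExt.countable_adjoin_isSeparable hUc).closure
      exact h1.separableSpace
    have hAB : (A : Set N) ⊆ (B : Set N) := by
      have h1 : closure D0 ⊆ (B : Set N) := by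
        rw [hBcoe]
        refine closure_mono ?_
        intro x hx
        exact StarAlgebra.subset_adjoin ℂ U (Set.mem_iUnion.2 ⟨0, hx⟩)
      exact fun x hx => h1 (hD0 hx)
    -- the key approximation property
    set SpanB : Submodule ℝ N := Submodule.span ℝ (TraceExt.cw '' (B : Set N)) with hSpanB
    have hkey : ∀ x ∈ (B : Set N), infDist x (SpanB : Set N) ≤ infDist x T := by
      have hDgood : ∀ n, ∀ b ∈ Dfun (Sfun n), infDist b (SpanB : Set N) ≤ infDist b T := by
        intro n b hb
        refine le_of_forall_pos_le_add fun ε hε => ?_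
        obtain ⟨m, hm⟩ := exists_nat_one_div_lt hε
        obtain ⟨c, hcV, hbc⟩ := (hVfun b m).2
        have hVB : Vfun b m ⊆ (B : Set N) := by
          have h1 : Vfun b m ⊆ Sfun (n+1) := by
            rw [hSsucc n]
            refine Set.subset_union_of_subset_right ?_ _
            intro v hv
            exact Set.mem_biUnion hb (Set.mem_iUnion.2 ⟨m, hv⟩)
          exact fun v hv => hUB (Set.mem_iUnion.2 ⟨n+1, h1 hv⟩)
        have hc' : c ∈ SpanB :=
          Submodule.span_mono (Set.image_mono hVB) hcV
        have h2 : infDist b (SpanB : Set N) ≤ ‖b - c‖ := by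
          rw [← dist_eq_norm]
          exact infDist_le_dist_of_mem hc'
        have hm' : (1:ℝ)/(m+1) ≤ ε := le_of_lt hm
        calc infDist b (SpanB : Set N) ≤ infDist b T + 1/(m+1) := le_trans h2 hbc
          _ ≤ infDist b T + ε := by linarith
      have hclosedset : IsClosed {x : N | infDist x (SpanB : Set N) ≤ infDist x T} :=
        isClosed_le (continuous_infDist_pt _) (continuous_infDist_pt _)
      have hmono' : ∀ {i j : ℕ}, i ≤ j →
          (StarAlgebra.adjoin ℂ (Sfun i) : StarSubalgebra ℂ N) ≤ StarAlgebra.adjoin ℂ (Sfun j) :=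
        fun {i j} hij => StarAlgebra.adjoin_le
          (fun y hy => StarAlgebra.subset_adjoin ℂ _ (hSmono hij hy))
      have hadj : ((StarAlgebra.adjoin ℂ U : StarSubalgebra ℂ N) : Set N) ⊆
          ⋃ n, ((StarAlgebra.adjoin ℂ (Sfun n) : StarSubalgebra ℂ N) : Set N) := by
        intro x hx
        induction hx using StarAlgebra.adjoin_induction with
        | mem x hx =>
          obtain ⟨n, hn⟩ := Set.mem_iUnion.1 hx
          exact Set.mem_iUnion.2 ⟨n, StarAlgebra.subset_adjoin ℂ _ hn⟩
        | algebraMap r => exact Set.mem_iUnion.2 ⟨0, algebraMap_mem _ r⟩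
        | add x y hx hy ihx ihy =>
          obtain ⟨i, hi⟩ := Set.mem_iUnion.1 ihx
          obtain ⟨j, hj⟩ := Set.mem_iUnion.1 ihy
          refine Set.mem_iUnion.2 ⟨max i j, add_mem ?_ ?_⟩
          · exact hmono' (le_max_left i j) hi
          · exact hmono' (le_max_right i j) hj
        | mul x y hx hy ihx ihy =>
          obtain ⟨i, hi⟩ := Set.mem_iUnion.1 ihx
          obtain ⟨j, hj⟩ := Set.mem_iUnion.1 ihy
          refine Set.mem_iUnion.2 ⟨max i j, mul_mem ?_ ?_⟩
          · exact hmono' (le_max_left i j) hi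
          · exact hmono' (le_max_right i j) hj
        | star x hx ihx =>
          obtain ⟨i, hi⟩ := Set.mem_iUnion.1 ihx
          exact Set.mem_iUnion.2 ⟨i, star_mem hi⟩
      have h2 : ((StarAlgebra.adjoin ℂ U : StarSubalgebra ℂ N) : Set N) ⊆
          closure (⋃ n, Dfun (Sfun n)) := by
        intro x hx
        obtain ⟨n, hn⟩ := Set.mem_iUnion.1 (hadj hx)
        have h3 : x ∈ closure (Dfun (Sfun n)) := (hDfun _ (hScount n)).2 hn
        exact closure_mono (Set.subset_iUnion (fun n => Dfun (Sfun n)) n) h3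
      have hsubgood : (⋃ n, Dfun (Sfun n)) ⊆
          {x : N | infDist x (SpanB : Set N) ≤ infDist x T} := by
        intro x hx
        obtain ⟨n, hn⟩ := Set.mem_iUnion.1 hx
        exact hDgood n x hn
      intro x hx
      rw [hBcoe] at hx
      have h4 : x ∈ closure (⋃ n, Dfun (Sfun n)) :=
        closure_minimal h2 isClosed_closure hx
      exact (hclosedset.closure_subset_iff.2 hsubgood) h4
    refine ⟨B, hBclosed, hBsep, hAB, one_mem B, ?_⟩
    haveI : Nontrivial N := hN
    intro τ hτ
    have hnorm : ∀ y : B, ‖τ y‖ ≤ ‖y‖ := TraceExt.norm_apply_le τ hτ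
    have hvanish : ∀ c ∈ SpanB, c ∈ B ∧ ∀ (h' : c ∈ B), τ ⟨c, h'⟩ = 0 := by
      intro c hc
      induction hc using Submodule.span_induction with
      | mem w hw =>
        obtain ⟨z, hzB, rfl⟩ := hw
        have hzB' : z ∈ B := hzB
        have hm : TraceExt.cw z ∈ B :=
          sub_mem (mul_mem hzB' (star_mem hzB')) (mul_mem (star_mem hzB') hzB')
        refine ⟨hm, fun h' => ?_⟩
        set zB : B := ⟨z, hzB'⟩ with hzBdef
        have he : (⟨TraceExt.cw z, h'⟩ : B) = zB * star zB - star zB * zB := by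
          apply Subtype.ext
          rfl
        rw [he, map_sub, hτ.2.2 zB (star zB), sub_self]
      | zero =>
        exact ⟨zero_mem B, fun h' => by rw [show (⟨0, h'⟩ : B) = 0 from rfl, map_zero]⟩
      | add x y hx hy ihx ihy =>
        obtain ⟨hxB, hx0⟩ := ihx
        obtain ⟨hyB, hy0⟩ := ihy
        refine ⟨add_mem hxB hyB, fun h' => ?_⟩
        have he : (⟨x + y, h'⟩ : B) = ⟨x, hxB⟩ + ⟨y, hyB⟩ := rfl
        rw [he, map_add, hx0 hxB, hy0 hyB, add_zero]
      | smul r x hx ihx =>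
        obtain ⟨hxB, hx0⟩ := ihx
        have hmem : r • x ∈ B := by
          rw [← algebraMap_smul ℂ r x]
          exact SMulMemClass.smul_mem _ hxB
        refine ⟨hmem, fun h' => ?_⟩
        have he : (⟨r • x, h'⟩ : B) = (algebraMap ℝ ℂ r) • ⟨x, hxB⟩ := by
          apply Subtype.ext
          show r • x = (algebraMap ℝ ℂ r) • x
          rw [algebraMap_smul]
        rw [he, map_smul, hx0 hxB, smul_zero]
    have hbound : ∀ (b : N) (hb : b ∈ B), ‖τ ⟨b, hb⟩‖ ≤ infDist b (SpanB : Set N) := by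
      intro b hb
      refine not_lt.1 fun hlt => ?_
      obtain ⟨c, hcS, hdc⟩ := (infDist_lt_iff ⟨0, SpanB.zero_mem⟩).1 hlt
      obtain ⟨hcB, hc0⟩ := hvanish c hcS
      have h1 : τ ⟨b, hb⟩ = τ ((⟨b, hb⟩ : B) - ⟨c, hcB⟩) := by
        rw [map_sub, hc0 hcB, sub_zero]
      have h2 : ‖τ ((⟨b, hb⟩ : B) - ⟨c, hcB⟩)‖ ≤ ‖((⟨b, hb⟩ : B) - ⟨c, hcB⟩ : B)‖ := hnorm _
      have h3 : ‖((⟨b, hb⟩ : B) - ⟨c, hcB⟩ : B)‖ = dist b c := by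
        rw [dist_eq_norm]; rfl
      rw [h1] at hdc
      rw [h3] at h2
      linarith
    -- the self-adjoint part of B as a real submodule
    set psa : Submodule ℝ N :=
      { carrier := {x : N | x ∈ B ∧ star x = x}
        add_mem' := fun hx hy => ⟨add_mem hx.1 hy.1, by rw [star_add, hx.2, hy.2]⟩
        zero_mem' := ⟨zero_mem B, star_zero N⟩
        smul_mem' := fun r x hx => ⟨by
            rw [← algebraMap_smul ℂ r x]
            exact SMulMemClass.smul_mem _ hx.1,
          by rw [star_smul, star_trivial, hx.2]⟩ } with hpsadef
    have hpsa1 : ∀ x : psa, (x : N) ∈ B := fun x => x.2.1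
    set f0 : psa →ₗ[ℝ] ℝ :=
      { toFun := fun x => (τ ⟨x.1, x.2.1⟩).re
        map_add' := fun x y => by
          have he : (⟨(x + y).1, (x + y).2.1⟩ : B) = ⟨x.1, x.2.1⟩ + ⟨y.1, y.2.1⟩ := rfl
          show (τ ⟨(x + y).1, (x + y).2.1⟩).re = (τ ⟨x.1, x.2.1⟩).re + (τ ⟨y.1, y.2.1⟩).re
          rw [he, map_add, Complex.add_re]
        map_smul' := fun r x => by
          have he : (⟨(r • x).1, (r • x).2.1⟩ : B) = (r : ℂ) • ⟨x.1, x.2.1⟩ := by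
            apply Subtype.ext
            show r • (x.1 : N) = (r : ℂ) • (x.1 : N)
            rw [← algebraMap_smul ℂ r (x.1 : N)]
            norm_num
          show (τ ⟨(r • x).1, (r • x).2.1⟩).re = r • (τ ⟨x.1, x.2.1⟩).re
          rw [he, map_smul]
          simp [smul_eq_mul] } with hf0def
    have hsubl : ∀ x : ((⟨psa, f0⟩ : N →ₗ.[ℝ] ℝ)).domain,
        (⟨psa, f0⟩ : N →ₗ.[ℝ] ℝ) x ≤ infDist (x : N) T := by
      intro x
      have h1 : (⟨psa, f0⟩ : N →ₗ.[ℝ] ℝ) x = (τ ⟨x.1, x.2.1⟩).re := rfl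
      rw [h1]
      calc (τ ⟨x.1, x.2.1⟩).re ≤ ‖τ ⟨x.1, x.2.1⟩‖ := by
            exact Complex.re_le_norm _
        _ ≤ infDist (x : N) (SpanB : Set N) := hbound x.1 x.2.1
        _ ≤ infDist (x : N) T := hkey (x : N) x.2.1
    obtain ⟨g, hgext, hgle⟩ := exists_extension_of_le_sublinear (⟨psa, f0⟩ : N →ₗ.[ℝ] ℝ)
      (fun x => infDist x T)
      (fun c hc x => TraceExt.infDist_smul K c hc x)
      (fun x y => TraceExt.infDist_add_le K x y) hsubl
    have hgK : ∀ c ∈ K, g c = 0 := by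
      intro c hc
      have h1 : g c ≤ 0 := by
        have := hgle c; rwa [infDist_zero_of_mem hc] at this
      have h2 : g (-c) ≤ 0 := by
        have := hgle (-c); rwa [infDist_zero_of_mem (neg_mem hc)] at this
      rw [map_neg] at h2; linarith
    have hgnorm : ∀ x : N, |g x| ≤ ‖x‖ := by
      intro x
      have hb : ∀ y : N, g y ≤ ‖y‖ := by
        intro y
        refine le_trans (hgle y) ?_
        have := infDist_le_dist_of_mem (x := y) (Submodule.zero_mem K)
        rwa [dist_zero_right] at this
      rw [abs_le]
      constructor
      · have := hb (-x); rw [map_neg, norm_neg] at this; linarith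
      · exact hb x
    -- symmetrization
    set gs : N →ₗ[ℝ] ℝ :=
      { toFun := fun x => (g x + g (star x)) / 2
        map_add' := fun x y => by
          show (g (x + y) + g (star (x + y))) / 2 = _
          rw [star_add, map_add, map_add]; ring
        map_smul' := fun r x => by
          show (g (r • x) + g (star (r • x))) / 2 = r • ((g x + g (star x)) / 2)
          rw [star_smul, star_trivial, map_smul, map_smul]
          simp only [smul_eq_mul]; ring } with hgsdef
    have hgs_apply : ∀ x : N, gs x = (g x + g (star x)) / 2 := fun x => rfl
    have hgs_sa : ∀ x : N, star x = x → gs x = g x := by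
      intro x hx; rw [hgs_apply, hx]; ring
    have hgs_skew : ∀ x : N, star x = -x → gs x = 0 := by
      intro x hx; rw [hgs_apply, hx, map_neg]; ring
    have hgs_norm : ∀ x : N, |gs x| ≤ ‖x‖ := by
      intro x
      rw [hgs_apply]
      have h1 := hgnorm x
      have h2 := hgnorm (star x)
      rw [norm_star] at h2
      rw [abs_le] at h1 h2
      rw [abs_le]
      constructor <;> [linarith [h1.1, h2.1]; linarith [h1.2, h2.2]]
    have hgs_K : ∀ c ∈ K, gs c = 0 := fun c hc => by
      rw [hgs_sa c (TraceExt.span_star_eq hc), hgK c hc]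
    have hgs_B : ∀ (b : N) (hb : b ∈ B), star b = b → ((gs b : ℝ) : ℂ) = τ ⟨b, hb⟩ := by
      intro b hb hsb
      have hmem : b ∈ psa := ⟨hb, hsb⟩
      have h1 : gs b = (τ ⟨b, hb⟩).re := by
        rw [hgs_sa b hsb]
        exact hgext ⟨b, hmem⟩
      have h2 : (τ ⟨b, hb⟩).im = 0 := by
        have hsy : star (⟨b, hb⟩ : B) = ⟨b, hb⟩ := Subtype.ext hsb
        have h3 := TraceExt.star_apply τ hτ (⟨b, hb⟩ : B)
        rw [hsy] at h3
        have h4 := congrArg Complex.im h3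
        simp only [Complex.conj_im] at h4
        linarith
      rw [h1]
      apply Complex.ext <;> simp [h2]
    set G : N →L[ℝ] ℝ := LinearMap.mkContinuous gs 1 (fun x => by
      rw [Real.norm_eq_abs, one_mul]; exact hgs_norm x) with hGdef
    have hGapp : ∀ x : N, G x = gs x := fun x => rfl
    set σ : N →L[ℂ] ℂ := G.extendTo𝕜' with hσdef
    have hσapp : ∀ x : N, σ x = ((gs x : ℝ) : ℂ) - I * ((gs ((I : ℂ) • x) : ℝ) : ℂ) := by
      intro x
      have := G.extendTo𝕜'_apply (𝕜 := ℂ) x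
      simp [hGapp] at this
      exact this
    have hσ_sa : ∀ x : N, star x = x → σ x = ((gs x : ℝ) : ℂ) := by
      intro x hx
      have hskew : star ((I : ℂ) • x) = -((I : ℂ) • x) := by
        rw [star_smul, hx, Complex.star_def, Complex.conj_I, neg_smul]
      rw [hσapp, hgs_skew _ hskew]
      simp
    have hext : ∀ b : B, τ b = σ (b : N) := by
      intro b
      set x : N := (b : N) with hx
      set h : N := (2⁻¹ : ℂ) • (x + star x) with hh
      set k : N := (-(I/2)) • (x - star x) with hk
      have hxB : x ∈ B := b.2
      have hhB : h ∈ B := SMulMemClass.smul_mem _ (add_mem hxB (star_mem hxB))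
      have hkB : k ∈ B := SMulMemClass.smul_mem _ (sub_mem hxB (star_mem hxB))
      have hhsa : star h = h := by
        rw [hh, star_smul, star_add, star_star]
        have h1 : star (2⁻¹ : ℂ) = (2⁻¹ : ℂ) := by
          rw [Complex.star_def, ← Complex.ofReal_ofNat, ← Complex.ofReal_inv, Complex.conj_ofReal]
        rw [h1, add_comm]
      have hksa : star k = k := by
        rw [hk, star_smul, star_sub, star_star]
        have h1 : star (-(I/2) : ℂ) = (I/2 : ℂ) := by
          simp [Complex.star_def]
          try ring
        rw [h1, ← neg_sub x (star x), smul_neg, ← neg_smul]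
      have hxhk : x = h + (I : ℂ) • k := by
        rw [hh, hk, smul_smul]
        have hc : (I : ℂ) * (-(I/2)) = (2⁻¹ : ℂ) := by
          rw [mul_neg, mul_div_assoc', Complex.I_mul_I]
          norm_num
        rw [hc]
        module
      have hτsplit : τ b = τ ⟨h, hhB⟩ + I * τ ⟨k, hkB⟩ := by
        have he : b = ⟨h, hhB⟩ + (I : ℂ) • ⟨k, hkB⟩ := by
          apply Subtype.ext
          exact hxhk
        rw [he, map_add, map_smul]
        simp [smul_eq_mul]
      have hσx : σ x = ((gs h : ℝ) : ℂ) + I * ((gs k : ℝ) : ℂ) := by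
        have e1 : σ x = σ h + (I : ℂ) * σ k := by
          conv_lhs => rw [hxhk]
          simp only [map_add, map_smul, smul_eq_mul]
        rw [e1, hσ_sa h hhsa, hσ_sa k hksa]
      rw [hτsplit, hσx, hgs_B h hhB hhsa, hgs_B k hkB hksa]
    have hgs1 : gs 1 = 1 := by
      have h1 := hgs_B 1 (one_mem B) (star_one N)
      rw [show (⟨(1:N), one_mem B⟩ : B) = 1 from rfl, hτ.1] at h1
      exact_mod_cast h1
    have hσ1 : σ 1 = 1 := by
      rw [hσ_sa 1 (star_one N), hgs1]
      norm_num
    have hσpos : ∀ x : N, ∃ r : ℝ, 0 ≤ r ∧ σ (star x * x) = r := by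
      intro x
      set a : N := star x * x with ha
      have hsa : star a = a := by rw [ha, star_mul, star_star]
      have hda : gs a = gs (a - ‖a‖ • 1) + ‖a‖ := by
        rw [map_sub, map_smul, hgs1]
        simp only [smul_eq_mul, mul_one]
        ring
      have hb1 : |gs (a - ‖a‖ • 1)| ≤ ‖a‖ := by
        calc |gs (a - ‖a‖ • 1)| ≤ ‖a - ‖a‖ • 1‖ := hgs_norm _
          _ = ‖‖a‖ • 1 - a‖ := norm_sub_rev _ _
          _ ≤ ‖a‖ := TraceExt.norm_sub_smul_one_le x
      refine ⟨gs a, ?_, hσ_sa a hsa⟩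
      rw [abs_le] at hb1
      rw [hda]
      linarith [hb1.1]
    have hσcw : ∀ z : N, σ (TraceExt.cw z) = 0 := by
      intro z
      rw [hσ_sa _ (TraceExt.cw_star z), hgs_K _ (Submodule.subset_span ⟨z, rfl⟩)]
      norm_num
    have hσtr : ∀ a b : N, σ (a * b) = σ (b * a) := by
      intro a b
      have hident : (4 : ℂ) • (a * b - b * a) =
          TraceExt.cw (a + star b) - TraceExt.cw (a - star b)
            + (I : ℂ) • TraceExt.cw (a + (I : ℂ) • star b)
            - (I : ℂ) • TraceExt.cw (a - (I : ℂ) • star b) := by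
        simp only [TraceExt.cw, star_add, star_sub, star_smul, star_star,
          Complex.star_def, Complex.conj_I]
        simp only [mul_add, add_mul, mul_sub, sub_mul, smul_mul_assoc, mul_smul_comm,
          smul_smul, smul_sub, smul_add, neg_smul, neg_mul, mul_neg, neg_neg]
        match_scalars
        all_goals try ring
        all_goals norm_num [Complex.I_sq]
      have happly := congrArg σ hident
      simp only [map_smul, map_sub, map_add, hσcw, smul_zero, mul_zero, sub_zero,
        add_zero, smul_eq_mul, sub_self] at happly
      linear_combination happly / 4
    exact ⟨σ, ⟨hσ1, hσpos, hσtr⟩, fun b => hext b⟩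
end

section
/- Let N be a unital C*-algebra and let A be a separable C*-subalgebra of N containing the unit of N. Then there exists a separable C*-subalgebra B of N with A ⊆ B ⊆ N such that for every b ∈ B, the distance from b to the ℂ-linear span of the set of commutators {xy − yx : x, y ∈ B} equals the distance from b to the ℂ-linear span of the set of commutators {xy − yx : x, y ∈ N}. -/
open TopologicalSpace Metric Set

/-- The ℂ-linear span of the commutators `x * y - y * x` with `x, y` ranging over a
subset `S` of a C*-algebra `N`. -/
noncomputable def commutatorSpan (N : Type*) [CStarAlgebra N] (S : Set N) : Submodule ℂ N :=
  Submodule.span ℂ {z : N | ∃ x ∈ S, ∃ y ∈ S, z = x * y - y * x}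

lemma countable_submonoidClosure {M : Type*} [Monoid M] {s : Set M} (hs : s.Countable) :
    (Submonoid.closure s : Set M).Countable := by
  rw [Submonoid.closure_eq_image_prod]
  haveI := hs.to_subtype
  have h : {l : List M | ∀ x ∈ l, x ∈ s} ⊆ Set.range (fun l : List s => l.map Subtype.val) := by
    intro l hl
    exact ⟨l.pmap Subtype.mk hl, by simp [List.map_pmap]⟩
  exact ((Set.countable_range _).mono h).image _

section Aux

variable {N : Type*} [CStarAlgebra N]

lemma commutatorSpan_mono {s t : Set N} (h : s ⊆ t) :
    commutatorSpan N s ≤ commutatorSpan N t :=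
  Submodule.span_mono (by rintro z ⟨x, hx, y, hy, rfl⟩; exact ⟨x, h hx, y, h hy, rfl⟩)

lemma isSeparable_adjoin {s : Set N} (hs : s.Countable) :
    IsSeparable ((StarAlgebra.adjoin ℂ s : StarSubalgebra ℂ N) : Set N) := by
  have h1 : ((StarAlgebra.adjoin ℂ s : StarSubalgebra ℂ N) : Set N)
      = (Submodule.span ℂ ((Submonoid.closure (s ∪ star s) : Submonoid N) : Set N) : Set N) :=
    congrArg (fun p : Submodule ℂ N => (p : Set N)) (StarAlgebra.adjoin_eq_span (R := ℂ) s)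
  rw [h1]
  have hstar : (star s : Set N).Countable := by
    rw [← Set.star_preimage]
    exact hs.preimage star_injective
  exact ((countable_submonoidClosure (hs.union hstar)).isSeparable).span

lemma key_approx (b : N) (k : ℕ) :
    ∃ F : Set N, F.Countable ∧ ∃ z ∈ commutatorSpan N F,
      dist b z < infDist b (commutatorSpan N (Set.univ : Set N) : Set N) + 1 / (k + 1) := by
  classical
  have h0 : ((commutatorSpan N (Set.univ : Set N) : Submodule ℂ N) : Set N).Nonempty :=
    ⟨0, Submodule.zero_mem _⟩
  have hlt : infDist b (commutatorSpan N (Set.univ : Set N) : Set N)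
      < infDist b (commutatorSpan N (Set.univ : Set N) : Set N) + 1 / (k + 1) := by
    have : (0 : ℝ) < 1 / (k + 1) := by positivity
    linarith
  obtain ⟨z, hzmem, hzd⟩ := (Metric.infDist_lt_iff h0).1 hlt
  obtain ⟨T, hT, hzT⟩ := Submodule.mem_span_finite_of_mem_span hzmem
  have hcomm : ∀ w ∈ (T : Set N), ∃ x y : N, w = x * y - y * x := by
    intro w hw
    obtain ⟨x, -, y, -, rfl⟩ := hT hw
    exact ⟨x, y, rfl⟩
  choose! xf yf hxy using hcomm
  refine ⟨xf '' T ∪ yf '' T, ((T.finite_toSet.image _).union (T.finite_toSet.image _)).countable,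
    z, ?_, hzd⟩
  refine Submodule.span_mono ?_ hzT
  intro w hw
  exact ⟨xf w, Or.inl ⟨w, hw, rfl⟩, yf w, Or.inr ⟨w, hw, rfl⟩, hxy w hw⟩

lemma step_lemma (s : Set N) (hs : s.Countable) :
    ∃ t : Set N, t.Countable ∧ s ⊆ t ∧
      closure ((StarAlgebra.adjoin ℂ s : StarSubalgebra ℂ N) : Set N) ⊆ closure t ∧
      ∀ b ∈ s, ∀ k : ℕ, ∃ z ∈ commutatorSpan N t,
        dist b z < infDist b (commutatorSpan N (Set.univ : Set N) : Set N) + 1 / (k + 1) := by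
  classical
  obtain ⟨c, hc_count, hc⟩ := isSeparable_adjoin (N := N) hs
  choose F hF_count z hz_mem hz_dist using fun (b : N) (k : ℕ) => key_approx (N := N) b k
  haveI := hs.to_subtype
  refine ⟨s ∪ c ∪ ⋃ (b : s) (k : ℕ), F b k, ?_, ?_, ?_, ?_⟩
  · exact ((hs.union hc_count).union
      (Set.countable_iUnion fun b => Set.countable_iUnion fun k => hF_count b k))
  · exact fun x hx => Or.inl (Or.inl hx)
  · refine closure_minimal ?_ isClosed_closure
    exact hc.trans (closure_mono fun x hx => Or.inl (Or.inr hx))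
  · intro b hb k
    refine ⟨z b k, ?_, hz_dist b k⟩
    refine commutatorSpan_mono ?_ (hz_mem b k)
    intro x hx
    exact Or.inr (Set.mem_iUnion.2 ⟨⟨b, hb⟩, Set.mem_iUnion.2 ⟨k, hx⟩⟩)

end Aux

/-- Given a unital C*-algebra `N` and a separable C*-subalgebra `A ⊆ N` containing the
unit, there is a separable C*-subalgebra `B` with `A ⊆ B ⊆ N` such that for every
`b ∈ B`, the distance from `b` to the span of commutators of `B` equals the distance
from `b` to the span of commutators of `N`. -/
theorem exists_separable_intermediate_subalgebra_commutator_dist_eq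
    (N : Type*) [CStarAlgebra N]
    (A : StarSubalgebra ℂ N) (hA_closed : IsClosed (A : Set N))
    (hA_sep : TopologicalSpace.SeparableSpace A) :
    ∃ B : StarSubalgebra ℂ N, IsClosed (B : Set N) ∧
      TopologicalSpace.SeparableSpace B ∧ A ≤ B ∧
      ∀ b ∈ B,
        Metric.infDist b (commutatorSpan N (B : Set N) : Set N) =
          Metric.infDist b (commutatorSpan N (Set.univ : Set N) : Set N) := by
  classical
  haveI : SeparableSpace ((A : Set N) : Type _) := hA_sep
  obtain ⟨c0, hc0_count, hc0⟩ := IsSeparable.of_subtype (A : Set N)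
  have step' : ∀ s : Set N, ∃ t : Set N, s.Countable →
      (t.Countable ∧ s ⊆ t ∧
        closure ((StarAlgebra.adjoin ℂ s : StarSubalgebra ℂ N) : Set N) ⊆ closure t ∧
        ∀ b ∈ s, ∀ k : ℕ, ∃ z ∈ commutatorSpan N t,
          dist b z < infDist b (commutatorSpan N (Set.univ : Set N) : Set N) + 1 / (k + 1)) := by
    intro s
    by_cases h : s.Countable
    · obtain ⟨t, h1, h2, h3, h4⟩ := step_lemma s h
      exact ⟨t, fun _ => ⟨h1, h2, h3, h4⟩⟩
    · exact ⟨s, fun h' => absurd h' h⟩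
  choose T hT using step'
  let D : ℕ → Set N := fun n => Nat.rec c0 (fun _ s => T s) n
  have hDc : ∀ n, (D n).Countable := by
    intro n; induction n with
    | zero => exact hc0_count
    | succ n ih => exact (hT _ ih).1
  have hT_sub : ∀ n, D n ⊆ T (D n) := fun n => (hT _ (hDc n)).2.1
  have hT_cl : ∀ n, closure ((StarAlgebra.adjoin ℂ (D n) : StarSubalgebra ℂ N) : Set N)
      ⊆ closure (T (D n)) := fun n => (hT _ (hDc n)).2.2.1
  have hT_wit : ∀ n, ∀ b ∈ D n, ∀ k : ℕ, ∃ z ∈ commutatorSpan N (T (D n)),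
      dist b z < infDist b (commutatorSpan N (Set.univ : Set N) : Set N) + 1 / (k + 1) :=
    fun n => (hT _ (hDc n)).2.2.2
  have hDmono : ∀ n, D n ⊆ D (n + 1) := fun n => hT_sub n
  have hDle : Monotone D := monotone_nat_of_le_succ hDmono
  set U := ⋃ n, D n with hU
  have hUc : U.Countable := Set.countable_iUnion hDc
  set B := (StarAlgebra.adjoin ℂ U).topologicalClosure with hB
  have hDU : ∀ n, D n ⊆ U := fun n => Set.subset_iUnion D n
  have hUB : U ⊆ (B : Set N) := by
    rw [hB, StarSubalgebra.topologicalClosure_coe]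
    exact fun x hx => subset_closure (StarAlgebra.subset_adjoin ℂ U hx)
  -- the adjoined algebra is contained in the closure of `U`
  have hadj : ((StarAlgebra.adjoin ℂ U : StarSubalgebra ℂ N) : Set N) ⊆ closure U := by
    intro x hx
    have hx' : x ∈ Algebra.adjoin ℂ (U ∪ star U) := by
      rw [← StarAlgebra.adjoin_toSubalgebra]
      exact hx
    have hstarU : (star U : Set N) = ⋃ n, (star (D n) : Set N) := by
      simp only [← Set.star_preimage, hU, Set.preimage_iUnion]
    have hUnion : U ∪ star U = ⋃ n, (D n ∪ star (D n)) := by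
      rw [hstarU, hU, Set.iUnion_union_distrib]
    rw [hUnion, Algebra.adjoin_iUnion] at hx'
    have hdir : Directed (· ≤ ·) (fun n => Algebra.adjoin ℂ (D n ∪ star (D n))) := by
      refine Monotone.directed_le fun m n hmn => Algebra.adjoin_mono ?_
      refine Set.union_subset_union (hDle hmn) ?_
      rw [← Set.star_preimage, ← Set.star_preimage]
      exact Set.preimage_mono (hDle hmn)
    rw [← SetLike.mem_coe, Subalgebra.coe_iSup_of_directed hdir] at hx'
    obtain ⟨n, hn⟩ := Set.mem_iUnion.1 hx'
    have hn2 : x ∈ (StarAlgebra.adjoin ℂ (D n)).toSubalgebra := by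
      rw [StarAlgebra.adjoin_toSubalgebra]; exact hn
    have hn' : x ∈ ((StarAlgebra.adjoin ℂ (D n) : StarSubalgebra ℂ N) : Set N) :=
      (StarSubalgebra.mem_toSubalgebra).1 hn2
    have : x ∈ closure ((StarAlgebra.adjoin ℂ (D n) : StarSubalgebra ℂ N) : Set N) :=
      subset_closure hn'
    exact closure_mono (Set.subset_iUnion D (n + 1)) (hT_cl n this)
  have hBU : (B : Set N) ⊆ closure U := by
    rw [hB, StarSubalgebra.topologicalClosure_coe]
    exact closure_minimal hadj isClosed_closure
  have hclUB : closure U ⊆ (B : Set N) :=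
    closure_minimal hUB ((StarAlgebra.adjoin ℂ U).isClosed_topologicalClosure)
  refine ⟨B, (StarAlgebra.adjoin ℂ U).isClosed_topologicalClosure, ?_, ?_, ?_⟩
  · exact ((hUc.isSeparable.closure).mono hBU).separableSpace
  · intro x hx
    exact hclUB (closure_mono (Set.subset_iUnion D 0) (hc0 hx))
  · intro b hb
    have hnonB : ((commutatorSpan N (B : Set N) : Submodule ℂ N) : Set N).Nonempty :=
      ⟨0, Submodule.zero_mem _⟩
    have hge : infDist b (commutatorSpan N (Set.univ : Set N) : Set N)
        ≤ infDist b (commutatorSpan N (B : Set N) : Set N) :=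
      infDist_le_infDist_of_subset
        (fun x hx => commutatorSpan_mono (Set.subset_univ _) hx) hnonB
    have hE : IsClosed {x : N | infDist x (commutatorSpan N (B : Set N) : Set N)
        ≤ infDist x (commutatorSpan N (Set.univ : Set N) : Set N)} :=
      isClosed_le (continuous_infDist_pt _) (continuous_infDist_pt _)
    have hUE : U ⊆ {x : N | infDist x (commutatorSpan N (B : Set N) : Set N)
        ≤ infDist x (commutatorSpan N (Set.univ : Set N) : Set N)} := by
      intro x hx
      obtain ⟨n, hn⟩ := Set.mem_iUnion.1 hx
      simp only [Set.mem_setOf_eq]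
      refine le_of_forall_pos_le_add fun ε hε => ?_
      obtain ⟨k, hk⟩ := exists_nat_one_div_lt hε
      obtain ⟨z, hz_mem, hz_dist⟩ := hT_wit n x hn k
      have hzB : z ∈ commutatorSpan N (B : Set N) := by
        refine commutatorSpan_mono ?_ hz_mem
        exact fun y hy => hUB (Set.subset_iUnion D (n + 1) hy)
      calc infDist x (commutatorSpan N (B : Set N) : Set N)
          ≤ dist x z := infDist_le_dist_of_mem hzB
        _ ≤ infDist x (commutatorSpan N (Set.univ : Set N) : Set N) + 1 / (k + 1) := hz_dist.le
        _ ≤ infDist x (commutatorSpan N (Set.univ : Set N) : Set N) + ε := by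
            have : (1 : ℝ) / (k + 1) ≤ ε := hk.le
            linarith
    have hle : infDist b (commutatorSpan N (B : Set N) : Set N)
        ≤ infDist b (commutatorSpan N (Set.univ : Set N) : Set N) :=
      hE.closure_subset_iff.2 hUE (hBU hb)
    exact le_antisymm hle hge
end

section
/- Let N be a unital C*-algebra and let B be a C*-subalgebra of N containing the unit of N. Suppose that for every b ∈ B, the distance from b to the closure of the ℂ-linear span of {xy − yx : x, y ∈ B} equals the distance from b to the closure of the ℂ-linear span of {xy − yx : x, y ∈ N}. Then every tracial state on B is the restriction to B of some tracial state on N. -/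
section CS
variable {A : Type*} [NormedRing A] [StarRing A] [NormedAlgebra ℂ A] [StarModule ℂ A]

lemma real_aux (τ : A →L[ℂ] ℂ) (hpos : ∀ x : A, ∃ r : ℝ, 0 ≤ r ∧ τ (star x * x) = r) :
    ∀ z : A, (τ (star z * z)).im = 0 ∧ 0 ≤ (τ (star z * z)).re := by
  intro z; obtain ⟨r, hr, h⟩ := hpos z; rw [h]; simp [hr]

lemma herm_aux (τ : A →L[ℂ] ℂ) (hpos : ∀ x : A, ∃ r : ℝ, 0 ≤ r ∧ τ (star x * x) = r) :
    ∀ x y : A, τ (star y * x) = (starRingEnd ℂ) (τ (star x * y)) := by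
  intro x y
  have h1 := real_aux τ hpos (x + y)
  have h2 := real_aux τ hpos (x + Complex.I • y)
  have e1 : star (x + y) * (x + y)
      = star x * x + (star x * y + (star y * x + star y * y)) := by
    simp only [star_add, add_mul, mul_add]; abel
  have e2 : star (x + Complex.I • y) * (x + Complex.I • y)
      = star x * x + (Complex.I • (star x * y) - Complex.I • (star y * x) + star y * y) := by
    simp only [star_add, star_smul, add_mul, mul_add, smul_mul_assoc, mul_smul_comm,
      Complex.star_def, Complex.conj_I]
    match_scalars <;> simp [Complex.ext_iff]
  rw [e1] at h1; rw [e2] at h2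
  simp only [map_add, map_sub, map_smul, Complex.add_im, Complex.sub_im, Complex.smul_im,
    Complex.I_re, Complex.I_im, Complex.smul_re, smul_eq_mul, Complex.mul_im, Complex.mul_re] at h1 h2
  obtain ⟨hx, -⟩ := real_aux τ hpos x
  obtain ⟨hy, -⟩ := real_aux τ hpos y
  apply Complex.ext
  · simp only [Complex.conj_re]
    nlinarith [h1.1, h2.1, hx, hy]
  · simp only [Complex.conj_im]
    nlinarith [h1.1, h2.1, hx, hy]

end CS

open Complex in
lemma cs_aux {A : Type*} [NormedRing A] [StarRing A] [NormedAlgebra ℂ A] [StarModule ℂ A]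
    (τ : A →L[ℂ] ℂ) (hpos : ∀ x : A, ∃ r : ℝ, 0 ≤ r ∧ τ (star x * x) = r) (x y : A) :
    ‖τ (star x * y)‖ ^ 2 ≤ (τ (star x * x)).re * (τ (star y * y)).re := by
  have hre := fun z : A => (real_aux τ hpos z).2
  set w := τ (star x * y) with hw_def
  by_cases hw : w = 0
  · rw [hw]; simpa using mul_nonneg (hre x) (hre y)
  · set u : ℂ := (starRingEnd ℂ) w / ‖w‖ with hu_def
    have hwp : (0:ℝ) < ‖w‖ := norm_pos_iff.mpr hw
    have huw : u * w = (‖w‖ : ℂ) := by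
      rw [hu_def, div_mul_eq_mul_div, Complex.conj_mul']
      have hne : ((‖w‖ : ℝ) : ℂ) ≠ 0 := by
        exact_mod_cast hwp.ne'
      rw [sq, mul_div_assoc, div_self hne, mul_one]
    have key : ∀ t : ℝ, 0 ≤ (τ (star y * y)).re * (t * t) + (-(2 * ‖w‖)) * t
        + (τ (star x * x)).re := by
      intro t
      set c : ℂ := -(t:ℂ) * u with hc_def
      have hexp : star (x + c • y) * (x + c • y)
          = star x * x + (c • (star x * y) + ((starRingEnd ℂ) c • (star y * x)
            + ((starRingEnd ℂ) c * c) • (star y * y))) := by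
        simp only [star_add, star_smul, add_mul, mul_add, smul_mul_assoc, mul_smul_comm]
        match_scalars <;> simp [Complex.star_def] <;> ring
      have h0 := (real_aux τ hpos (x + c • y)).2
      rw [hexp] at h0
      have hcw : c * w = ((-(t * ‖w‖) : ℝ) : ℂ) := by
        rw [hc_def, mul_assoc, huw]; push_cast; ring
      have hu1 : ‖u‖ = 1 := by
        rw [hu_def, norm_div, RCLike.norm_conj]
        simp only [Complex.norm_real, Real.norm_eq_abs, _root_.abs_of_nonneg (norm_nonneg w)]
        exact div_self (ne_of_gt hwp)
      have hnc : ‖c‖ = |t| := by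
        rw [hc_def, norm_mul, hu1, mul_one, norm_neg, Complex.norm_real, Real.norm_eq_abs]
      have hcc : (starRingEnd ℂ) c * c = ((t^2 : ℝ) : ℂ) := by
        rw [← Complex.normSq_eq_conj_mul_self, Complex.normSq_eq_norm_sq,
          hnc, _root_.sq_abs]
      have hv : τ (star y * x) = (starRingEnd ℂ) w := herm_aux τ hpos x y
      simp only [map_add, map_smul, smul_eq_mul] at h0
      rw [hv, ← hw_def] at h0
      have hcv : (starRingEnd ℂ) c * (starRingEnd ℂ) w = ((-(t * ‖w‖) : ℝ) : ℂ) := by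
        rw [← map_mul, hcw]
        simp
      rw [hcw, hcv, hcc] at h0
      simp only [Complex.add_re, Complex.ofReal_re, Complex.mul_re, Complex.ofReal_im] at h0
      nlinarith [h0]
    have hd := discrim_le_zero key
    rw [discrim] at hd
    nlinarith [hd]

lemma re_le_norm_aux (z : ℂ) : z.re ≤ ‖z‖ :=
  (le_abs_self _).trans (Complex.abs_re_le_norm z)

lemma norm_le_aux {A : Type*} [NormedRing A] [StarRing A] [CStarRing A] [NormedAlgebra ℂ A]
    [StarModule ℂ A] (τ : A →L[ℂ] ℂ) (h1 : τ 1 = 1)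
    (hpos : ∀ x : A, ∃ r : ℝ, 0 ≤ r ∧ τ (star x * x) = r) :
    ∀ b : A, ‖τ b‖ ≤ ‖b‖ := by
  have hsq : ∀ a : A, ‖τ a‖ ^ 2 ≤ ‖τ (star a * a)‖ := by
    intro a
    have h := cs_aux τ hpos 1 a
    simp only [star_one, one_mul, h1, Complex.one_re, one_mul] at h
    exact h.trans (re_le_norm_aux _)
  have hpow : ∀ n : ℕ, ∀ a : A, IsSelfAdjoint a → ‖τ a‖ ^ 2 ^ n ≤ ‖τ (a ^ 2 ^ n)‖ := by
    intro n
    induction n with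
    | zero => intro a _; simp
    | succ n ih =>
      intro a ha
      have h2 : ‖τ a‖ ^ 2 ≤ ‖τ (a ^ 2)‖ := by
        have h := hsq a
        rwa [ha.star_eq, ← sq] at h
      calc ‖τ a‖ ^ 2 ^ (n + 1) = (‖τ a‖ ^ 2) ^ 2 ^ n := by
            rw [← pow_mul, pow_succ']
        _ ≤ ‖τ (a ^ 2)‖ ^ 2 ^ n := pow_le_pow_left₀ (by positivity) h2 _
        _ ≤ ‖τ ((a ^ 2) ^ 2 ^ n)‖ := ih (a ^ 2) (ha.pow 2)
        _ = ‖τ (a ^ 2 ^ (n + 1))‖ := by rw [← pow_mul, ← pow_succ']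
  have hsa : ∀ a : A, IsSelfAdjoint a → ‖τ a‖ ≤ ‖a‖ := by
    intro a ha
    by_cases h0 : ‖a‖ = 0
    · have ha0 : a = 0 := norm_eq_zero.mp h0
      simp [ha0]
    have hapos : 0 < ‖a‖ := lt_of_le_of_ne (norm_nonneg a) (Ne.symm h0)
    have key : ∀ n : ℕ, ‖τ a‖ ^ 2 ^ n ≤ ‖τ‖ * ‖a‖ ^ 2 ^ n := by
      intro n
      refine (hpow n a ha).trans ?_
      refine (τ.le_opNorm _).trans ?_
      have hn : ‖a ^ 2 ^ n‖ = ‖a‖ ^ 2 ^ n := by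
        have h := congrArg (fun t : NNReal => (t : ℝ)) (ha.nnnorm_pow_two_pow n)
        simpa [coe_nnnorm] using h
      rw [hn]
    set x := ‖τ a‖ / ‖a‖ with hx
    have hxn : ∀ n : ℕ, x ^ 2 ^ n ≤ ‖τ‖ := by
      intro n
      rw [hx, div_pow, div_le_iff₀ (by positivity)]
      exact key n
    have hx1 : x ≤ 1 := by
      by_contra hgt
      push_neg at hgt
      obtain ⟨n, hn⟩ := pow_unbounded_of_one_lt ‖τ‖ hgt
      have hle : x ^ n ≤ x ^ 2 ^ n := pow_le_pow_right₀ hgt.le (Nat.le_of_lt (Nat.lt_two_pow_self (n := n)))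
      exact absurd (hxn n) (not_le.mpr (lt_of_lt_of_le hn hle))
    calc ‖τ a‖ = x * ‖a‖ := by rw [hx]; field_simp
      _ ≤ 1 * ‖a‖ := mul_le_mul_of_nonneg_right hx1 (norm_nonneg a)
      _ = ‖a‖ := one_mul _
  intro b
  have h2 : ‖τ b‖ ^ 2 ≤ ‖b‖ ^ 2 := by
    refine (hsq b).trans ?_
    refine (hsa _ (IsSelfAdjoint.star_mul_self b)).trans ?_
    rw [CStarRing.norm_star_mul_self, sq]
  exact le_of_pow_le_pow_left₀ two_ne_zero (norm_nonneg b) h2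

lemma pos_aux {A : Type*} [CStarAlgebra A] (σ : A →L[ℂ] ℂ) (h1 : σ 1 = 1)
    (hle : ∀ z : A, ‖σ z‖ ≤ ‖z‖) :
    ∀ x : A, ∃ r : ℝ, 0 ≤ r ∧ σ (star x * x) = r := by
  letI := CStarAlgebra.spectralOrder A
  haveI := CStarAlgebra.spectralOrderedRing A
  have hnt : (1 : A) ≠ 0 := by
    intro h
    rw [h, map_zero] at h1
    exact one_ne_zero h1.symm
  haveI : Nontrivial A := ⟨1, 0, hnt⟩
  intro x
  set a := star x * x with ha_def
  have ha : IsSelfAdjoint a := IsSelfAdjoint.star_mul_self x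
  have him : (σ a).im = 0 := by
    have key : ∀ t : ℝ, 2 * (σ a).im * t ≤ ‖a‖ ^ 2 - (σ a).re ^ 2 - (σ a).im ^ 2 := by
      intro t
      set z : A := a + ((t : ℂ) * Complex.I) • 1 with hz_def
      have hmul : star z * z = a * a + ((t : ℂ) ^ 2) • 1 := by
        rw [hz_def]
        simp only [star_add, star_smul, star_one, ha.star_eq, star_mul', Complex.star_def,
          map_mul, Complex.conj_I, Complex.conj_ofReal, add_mul, mul_add, smul_mul_assoc,
          mul_smul_comm, mul_one, one_mul]
        match_scalars <;> simp [Complex.ext_iff, pow_two] <;> ring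
      have hz2 : ‖z‖ ^ 2 ≤ ‖a‖ ^ 2 + t ^ 2 := by
        have hcs : ‖star z * z‖ = ‖z‖ * ‖z‖ := CStarRing.norm_star_mul_self
        rw [← sq] at hcs
        rw [← hcs, hmul]
        refine (norm_add_le _ _).trans ?_
        have e : ‖((t : ℂ) ^ 2) • (1 : A)‖ = t ^ 2 := by
          rw [norm_smul, norm_one, mul_one, norm_pow, Complex.norm_real, Real.norm_eq_abs, sq_abs]
        rw [e]
        exact add_le_add_left ((norm_mul_le a a).trans_eq (sq ‖a‖).symm) _
      have hσz : σ z = σ a + (t : ℂ) * Complex.I := by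
        rw [hz_def, map_add, map_smul, h1, smul_eq_mul, mul_one]
      have hn : ‖σ z‖ ^ 2 ≤ ‖z‖ ^ 2 := pow_le_pow_left₀ (norm_nonneg _) (hle z) 2
      rw [hσz] at hn
      have hexp : ‖σ a + (t : ℂ) * Complex.I‖ ^ 2
          = (σ a).re ^ 2 + ((σ a).im + t) ^ 2 := by
        rw [Complex.sq_norm, Complex.normSq_apply]
        simp [Complex.add_re, Complex.add_im]
        ring
      rw [hexp] at hn
      nlinarith [hn.trans hz2]
    by_contra himne
    set d := ‖a‖ ^ 2 - (σ a).re ^ 2 - (σ a).im ^ 2 with hd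
    have h2 := key ((|d| + 1) / ((σ a).im * 2))
    have h4 : 2 * (σ a).im * ((|d| + 1) / ((σ a).im * 2)) = |d| + 1 := by
      field_simp
    rw [h4] at h2
    linarith [le_abs_self d]
  have hb0 : (0 : A) ≤ a := star_mul_self_nonneg x
  have hub : a ≤ algebraMap ℝ A ‖a‖ := ha.le_algebraMap_norm_self
  set s := algebraMap ℝ A ‖a‖ - a with hs_def
  have h0s : 0 ≤ s := sub_nonneg.mpr hub
  have hsle : s ≤ algebraMap ℝ A ‖a‖ := by
    simpa [hs_def] using sub_le_self (algebraMap ℝ A ‖a‖) hb0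
  have hsn : ‖s‖ ≤ ‖a‖ := by
    refine (CStarAlgebra.norm_le_norm_of_nonneg_of_le h0s hsle).trans ?_
    rw [Algebra.algebraMap_eq_smul_one, norm_smul, norm_one, mul_one, Real.norm_eq_abs,
      abs_of_nonneg (norm_nonneg a)]
  have halg : algebraMap ℝ A ‖a‖ = ((‖a‖ : ℂ)) • (1 : A) := by
    rw [IsScalarTower.algebraMap_apply ℝ ℂ A, Algebra.algebraMap_eq_smul_one]
    norm_num
  have hσs : σ s = (‖a‖ : ℂ) - σ a := by
    rw [hs_def, map_sub, halg, map_smul, h1, smul_eq_mul, mul_one]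
  have h5 : (σ s).re ≤ ‖σ s‖ := re_le_norm_aux _
  have h6 : ‖σ s‖ ≤ ‖a‖ := (hle s).trans hsn
  have h7 : (σ s).re = ‖a‖ - (σ a).re := by rw [hσs]; simp
  refine ⟨(σ a).re, by linarith, ?_⟩
  apply Complex.ext <;> simp [him]

/-- Let `N` be a unital C*-algebra and `B ⊆ N` a C*-subalgebra containing the unit such
that for every `b ∈ B`, the distance from `b` to the closure of the span of commutators
of `B` equals the distance from `b` to the closure of the span of commutators of `N`.
Then every tracial state on `B` extends to a tracial state on `N`. -/
theorem tracialState_extends_of_commutator_dist_eq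
    (N : Type*) [CStarAlgebra N]
    (B : StarSubalgebra ℂ N) (hB_closed : IsClosed (B : Set N))
    (hdist : ∀ b ∈ B,
      Metric.infDist b (closure (commutatorSpan N (B : Set N) : Set N)) =
        Metric.infDist b (closure (commutatorSpan N (Set.univ : Set N) : Set N))) :
    ∀ τ : B →L[ℂ] ℂ, IsTracialState τ →
      ∃ σ : N →L[ℂ] ℂ, IsTracialState σ ∧ ∀ b : B, τ b = σ (b : N) := by
  intro τ hτ
  obtain ⟨hτ1, hτpos, hτtr⟩ := hτ
  have hτnorm : ∀ b : B, ‖τ b‖ ≤ ‖b‖ := norm_le_aux τ hτ1 hτpos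
  set J : B →ₗ[ℂ] N := B.subtype.toAlgHom.toLinearMap with hJ
  have hJval : ⇑J = (Subtype.val : B → N) := rfl
  set SB : Submodule ℂ B := Submodule.span ℂ {z : B | ∃ x y : B, z = x * y - y * x} with hSB
  have hmap : commutatorSpan N (B : Set N) = SB.map J := by
    rw [hSB, Submodule.map_span, commutatorSpan]
    congr 1
    ext z
    constructor
    · rintro ⟨x, hx, y, hy, rfl⟩
      exact ⟨⟨x, hx⟩ * ⟨y, hy⟩ - ⟨y, hy⟩ * ⟨x, hx⟩, ⟨⟨x, hx⟩, ⟨y, hy⟩, rfl⟩, rfl⟩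
    · rintro ⟨w, ⟨x, y, rfl⟩, rfl⟩
      exact ⟨(x : N), x.2, (y : N), y.2, rfl⟩
  have hclosed_emb := hB_closed.isClosedEmbedding_subtypeVal
  have hclos : closure ((commutatorSpan N (B : Set N) : Set N))
      = Subtype.val '' closure (SB : Set B) := by
    rw [hmap]
    have h : ((SB.map J : Submodule ℂ N) : Set N) = Subtype.val '' (SB : Set B) := by
      rw [Submodule.map_coe, hJval]
    rw [h]
    exact hclosed_emb.closure_image_eq _
  have hvanish : ∀ c : B, (c : B) ∈ closure (SB : Set B) → τ c = 0 := by
    intro c hc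
    have hSBker : SB ≤ LinearMap.ker (τ : B →ₗ[ℂ] ℂ) := by
      rw [hSB, Submodule.span_le]
      rintro _ ⟨x, y, rfl⟩
      simp only [SetLike.mem_coe, LinearMap.mem_ker, ContinuousLinearMap.coe_coe]
      rw [map_sub, hτtr x y, sub_self]
    have hclosker : closure (SB : Set B) ⊆ (LinearMap.ker (τ : B →ₗ[ℂ] ℂ) : Set B) :=
      closure_minimal hSBker (ContinuousLinearMap.isClosed_ker τ)
    exact LinearMap.mem_ker.mp (hclosker hc)
  set M : Submodule ℂ N := (commutatorSpan N (Set.univ : Set N)).topologicalClosure with hM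
  have hMcoe : (M : Set N) = closure ((commutatorSpan N (Set.univ : Set N) : Set N)) := rfl
  have hkey : ∀ b : B, ‖τ b‖ ≤ ‖(Submodule.Quotient.mk (b : N) : N ⧸ M)‖ := by
    intro b
    have hnm : ‖(Submodule.Quotient.mk (b : N) : N ⧸ M)‖ = Metric.infDist (b : N) (M : Set N) :=
      QuotientAddGroup.norm_mk (S := M.toAddSubgroup) (b : N)
    rw [hnm, hMcoe, ← hdist (b : N) b.2]
    have hne : (closure ((commutatorSpan N (B : Set N) : Set N))).Nonempty :=
      ⟨0, subset_closure (Submodule.zero_mem _)⟩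
    refine le_of_not_gt fun hlt => ?_
    obtain ⟨c, hc, hdlt⟩ := (Metric.infDist_lt_iff hne).mp hlt
    rw [hclos] at hc
    obtain ⟨c', hc', rfl⟩ := hc
    have hv : τ c' = 0 := hvanish c' hc'
    have heq : ‖τ b‖ = ‖τ (b - c')‖ := by rw [map_sub, hv, sub_zero]
    have hle2 : ‖τ (b - c')‖ ≤ dist (b : N) (c' : N) := by
      refine (hτnorm _).trans_eq ?_
      rw [dist_eq_norm]
      norm_cast
    rw [heq] at hdlt
    exact absurd hdlt (not_lt.mpr hle2)
  set φ : B →ₗ[ℂ] (N ⧸ M) := M.mkQ.comp J with hφ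
  have hφapp : ∀ b : B, φ b = Submodule.Quotient.mk (b : N) := fun _ => rfl
  have hker : LinearMap.ker φ ≤ LinearMap.ker (τ : B →ₗ[ℂ] ℂ) := by
    intro b hb
    rw [LinearMap.mem_ker] at hb ⊢
    have h := hkey b
    rw [← hφapp, hb, norm_zero] at h
    simpa using norm_le_zero_iff.mp h
  set ψ : (LinearMap.range φ) →ₗ[ℂ] ℂ :=
    ((LinearMap.ker φ).liftQ (τ : B →ₗ[ℂ] ℂ) hker).comp φ.quotKerEquivRange.symm.toLinearMap
    with hψ
  have hψapp : ∀ (b : B) (h : φ b ∈ LinearMap.range φ), ψ ⟨φ b, h⟩ = τ b := by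
    intro b h
    rw [hψ]
    simp only [LinearMap.comp_apply, LinearEquiv.coe_toLinearMap]
    rw [LinearMap.quotKerEquivRange_symm_apply_image]
    simp [Submodule.mkQ_apply, Submodule.liftQ_apply]
  have hψbound : ∀ w : LinearMap.range φ, ‖ψ w‖ ≤ 1 * ‖w‖ := by
    rintro ⟨w, hw⟩
    obtain ⟨b, rfl⟩ := hw
    rw [hψapp b (LinearMap.mem_range_self φ b), one_mul]
    exact hkey b
  set ψc : (LinearMap.range φ : Submodule ℂ (N ⧸ M)) →L[ℂ] ℂ :=
    LinearMap.mkContinuous ψ 1 hψbound with hψc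
  obtain ⟨g, hgext, hgnorm⟩ := exists_extension_norm_eq (LinearMap.range φ) ψc
  have hgle : ‖g‖ ≤ 1 := by
    rw [hgnorm]
    exact LinearMap.mkContinuous_norm_le ψ zero_le_one hψbound
  set q : N →L[ℂ] (N ⧸ M) := LinearMap.mkContinuous M.mkQ 1
    (fun x => by simpa [one_mul] using Submodule.Quotient.norm_mk_le (S := M) x) with hq
  set σ : N →L[ℂ] ℂ := g.comp q with hσ
  have hσapp : ∀ b : B, σ (b : N) = τ b := by
    intro b
    have h1 : σ (b : N) = g (φ b) := rfl
    rw [h1]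
    have h2 := hgext ⟨φ b, LinearMap.mem_range_self φ b⟩
    rw [h2, hψc]
    rw [LinearMap.mkContinuous_apply]
    exact hψapp b _
  have hσle : ∀ z : N, ‖σ z‖ ≤ ‖z‖ := by
    intro z
    calc ‖σ z‖ = ‖g (q z)‖ := rfl
      _ ≤ ‖g‖ * ‖q z‖ := g.le_opNorm _
      _ ≤ 1 * ‖q z‖ := mul_le_mul_of_nonneg_right hgle (norm_nonneg _)
      _ = ‖q z‖ := one_mul _
      _ ≤ ‖z‖ := Submodule.Quotient.norm_mk_le (S := M) z
  have hσ1 : σ 1 = 1 := by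
    have h1B : ((1 : B) : N) = 1 := rfl
    rw [← h1B, hσapp, hτ1]
  refine ⟨σ, ⟨hσ1, pos_aux σ hσ1 hσle, ?_⟩, fun b => (hσapp b).symm⟩
  intro a b
  have hmem : a * b - b * a ∈ M := by
    apply Submodule.le_topologicalClosure
    exact Submodule.subset_span ⟨a, trivial, b, trivial, rfl⟩
  have h0 : σ (a * b - b * a) = 0 := by
    have hq0 : q (a * b - b * a) = 0 := by
      rw [hq, LinearMap.mkContinuous_apply, Submodule.mkQ_apply]
      exact (Submodule.Quotient.mk_eq_zero M).mpr hmem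
    calc σ (a * b - b * a) = g (q (a * b - b * a)) := rfl
      _ = g 0 := by rw [hq0]
      _ = 0 := map_zero g
  rw [map_sub] at h0
  exact sub_eq_zero.mp h0
end

section
/- Let B be a unital C*-algebra, let r be a positive integer, and let (Bₙ) be an increasing sequence of C*-subalgebras of B, each containing the unit of B, whose union is dense in B. Suppose that for every n, the set of r-tuples (x₁, …, x_r) ∈ (Bₙ)ʳ for which there exist y₁, …, y_r ∈ Bₙ with y₁x₁ + ⋯ + y_r x_r = 1 is dense in (Bₙ)ʳ. Then the set {(x₁, …, x_r) ∈ Bʳ : there exist y₁, …, y_r ∈ B with y₁x₁ + ⋯ + y_r x_r = 1} is dense in Bʳ. -/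
/-- `Lg r D` is the set of `r`-tuples of elements of a unital ring `D` which generate
`D` as a left ideal: the tuples `(x₁, …, x_r)` for which there are `y₁, …, y_r` with
`y₁ x₁ + ⋯ + y_r x_r = 1`.  Density of this set in `Dʳ` is Rieffel's characterization
of topological stable rank at most `r`. -/
def Lg (r : ℕ) (D : Type*) [Ring D] : Set (Fin r → D) :=
  {x | ∃ y : Fin r → D, ∑ i, y i * x i = 1}

/-- If a unital C*-algebra `B` is the closure of an increasing union of unital
C*-subalgebras `Bₙ` with `Lg_r(Bₙ)` dense in `(Bₙ)ʳ` for every `n`, then `Lg_r(B)` is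
dense in `Bʳ`. -/
theorem lg_dense_of_increasing_union
    (B : Type*) [CStarAlgebra B] (r : ℕ) (hr : 0 < r)
    (C : ℕ → StarSubalgebra ℂ B)
    (hC_closed : ∀ n, IsClosed (C n : Set B))
    (hC_mono : Monotone C)
    (hC_dense : Dense (⋃ n, (C n : Set B)))
    (hC_lg : ∀ n, Dense (Lg r (C n))) :
    Dense (Lg r B) := by
  intro x
  rw [Metric.mem_closure_iff]
  intro ε hε
  have h1 : ∀ i : Fin r, ∃ n : ℕ, ∃ b ∈ C n, dist (x i) b < ε / 2 := by
    intro i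
    obtain ⟨b, hb, hd⟩ := Metric.mem_closure_iff.mp (hC_dense (x i)) (ε / 2) (by linarith)
    obtain ⟨n, hn⟩ := Set.mem_iUnion.mp hb
    exact ⟨n, b, hn, hd⟩
  choose n b hb hd using h1
  set N : ℕ := Finset.univ.sup n with hN
  have hbN : ∀ i, b i ∈ C N := fun i =>
    hC_mono (Finset.le_sup (Finset.mem_univ i)) (hb i)
  set b' : Fin r → C N := fun i => ⟨b i, hbN i⟩ with hb'
  obtain ⟨c, hc, hdc⟩ := Metric.mem_closure_iff.mp (hC_lg N b') (ε / 2) (by linarith)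
  obtain ⟨y, hy⟩ := hc
  refine ⟨fun i => (c i : B), ⟨fun i => (y i : B), ?_⟩, ?_⟩
  · have := congrArg (Subtype.val) hy
    push_cast at this
    exact this
  · have hlt : ∀ i, dist (x i) (c i : B) < ε := by
      intro i
      have h2 : dist (b' i) (c i) ≤ dist b' c := dist_le_pi_dist b' c i
      have h3 : dist (b i) (c i : B) < ε / 2 := by
        rw [← Subtype.dist_eq (b' i) (c i)] at *
        exact lt_of_le_of_lt h2 hdc
      calc dist (x i) (c i : B) ≤ dist (x i) (b i) + dist (b i) (c i : B) := dist_triangle _ _ _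
        _ < ε / 2 + ε / 2 := add_lt_add (hd i) h3
        _ = ε := by ring
    exact (dist_pi_lt_iff hε).mpr hlt
end
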